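/- Let G be a (P₃ ∪ 2P₁)-free graph and S ⊆ V(G) a set such that G − S has at least three connected components. Then every connected component of G − S is a complete graph. -/

import Mathlib

open SimpleGraph

/-- The number of connected components of `G − S`. -/
noncomputable def numComp {V : Type*} (G : SimpleGraph V) (S : Set V) : ℕ :=
  Nat.card (G.induce Sᶜ).ConnectedComponent

/-- `G` is `t`-tough: every cutset `S` satisfies `|S| ≥ t · c(G − S)`. -/
def Tough {V : Type*} (t : ℝ) (G : SimpleGraph V) : Prop :=
  ∀ S : Set V, 2 ≤ numComp G S → t * (numComp G S : ℝ) ≤ (S.ncard : ℝ)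

/-- `G` contains no induced copy of `H`. -/
def InducedFree {W V : Type*} (H : SimpleGraph W) (G : SimpleGraph V) : Prop :=
  ¬ ∃ f : W ↪ V, ∀ a b : W, G.Adj (f a) (f b) ↔ H.Adj a b

/-- `P₃ ∪ P₁`: a path on three vertices plus one isolated vertex. -/
def P3UnionP1 : SimpleGraph (Fin 4) := SimpleGraph.fromEdgeSet {s(0, 1), s(1, 2)}

/-- `P₃ ∪ 2P₁`: a path on three vertices plus two isolated vertices. -/
def P3Union2P1 : SimpleGraph (Fin 5) := SimpleGraph.fromEdgeSet {s(0, 1), s(1, 2)}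

lemma walk_triple {V : Type*} (G : SimpleGraph V) {u v : V} (p : G.Walk u v) :
    ¬G.Adj u v → u ≠ v →
    ∃ x y z : V, G.Adj x y ∧ G.Adj y z ∧ ¬G.Adj x z ∧ x ≠ z ∧ G.Reachable u x := by
  induction p with
  | nil => exact fun _ h => absurd rfl h
  | @cons a b c h q ih =>
    intro hna hne
    by_cases hbc : b = c
    · subst hbc; exact absurd h hna
    · by_cases hadj : G.Adj b c
      · exact ⟨a, b, c, h, hadj, hna, hne, Reachable.refl a⟩
      · obtain ⟨x, y, z, h1, h2, h3, h4, h5⟩ := ih hadj hbc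
        exact ⟨x, y, z, h1, h2, h3, h4, (h.reachable).trans h5⟩

lemma P3Union2P1_adj (i j : Fin 5) :
    P3Union2P1.Adj i j ↔ ((i = 0 ∧ j = 1) ∨ (i = 1 ∧ j = 0) ∨ (i = 1 ∧ j = 2) ∨ (i = 2 ∧ j = 1)) := by
  simp only [P3Union2P1, fromEdgeSet_adj, Set.mem_insert_iff, Set.mem_singleton_iff,
    Sym2.eq_iff]
  constructor
  · rintro ⟨h | h, hne⟩ <;> tauto
  · rintro (⟨rfl, rfl⟩ | ⟨rfl, rfl⟩ | ⟨rfl, rfl⟩ | ⟨rfl, rfl⟩) <;> simp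

/-- In a `(P₃ ∪ 2P₁)`-free graph, if `G − S` has at least three components then every
component of `G − S` is a complete graph. -/
theorem stmt_3 {V : Type*} [Fintype V] (G : SimpleGraph V)
    (hfree : InducedFree P3Union2P1 G) (S : Set V) (hS : 3 ≤ numComp G S) :
    ∀ u v : ↥(Sᶜ), u ≠ v → (G.induce Sᶜ).Reachable u v → (G.induce Sᶜ).Adj u v := by
  set G' := G.induce Sᶜ with hG'
  intro u v hne hreach
  by_contra hna
  obtain ⟨p⟩ := hreach
  obtain ⟨x, y, z, hxy, hyz, hxz, hxzne, hux⟩ := walk_triple G' p hna hne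
  -- find two components other than that of x
  set c0 := G'.connectedComponentMk x with hc0
  haveI hfin : Finite G'.ConnectedComponent :=
    Finite.of_surjective G'.connectedComponentMk (fun c => c.exists_rep)
  haveI hfty : Fintype G'.ConnectedComponent := Fintype.ofFinite _
  haveI := Classical.decEq G'.ConnectedComponent
  have h3 : 3 ≤ Fintype.card G'.ConnectedComponent := by
    have := hS
    simpa [numComp, Nat.card_eq_fintype_card] using this
  obtain ⟨c1, hc1mem, c2, hc2mem, hc12⟩ :
      ∃ c1 ∈ Finset.univ.erase c0, ∃ c2 ∈ Finset.univ.erase c0, c1 ≠ c2 := by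
    apply Finset.one_lt_card.mp
    rw [Finset.card_erase_of_mem (Finset.mem_univ c0), Finset.card_univ]
    omega
  have hc1 : c1 ≠ c0 := (Finset.mem_erase.mp hc1mem).1
  have hc2 : c2 ≠ c0 := (Finset.mem_erase.mp hc2mem).1
  obtain ⟨a, ha⟩ := c1.exists_rep
  obtain ⟨b, hb⟩ := c2.exists_rep
  -- non-adjacency facts
  have hax : ∀ w : ↥(Sᶜ), G'.connectedComponentMk w = c0 → ¬G'.Adj a w ∧ a ≠ w := by
    intro w hw
    constructor
    · intro h
      exact hc1 (by rw [← ha, ← hw]; exact ConnectedComponent.eq.mpr h.reachable)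
    · rintro rfl; exact hc1 (ha ▸ hw ▸ rfl)
  have hbx : ∀ w : ↥(Sᶜ), G'.connectedComponentMk w = c0 → ¬G'.Adj b w ∧ b ≠ w := by
    intro w hw
    constructor
    · intro h
      exact hc2 (by rw [← hb, ← hw]; exact ConnectedComponent.eq.mpr h.reachable)
    · rintro rfl; exact hc2 (hb ▸ hw ▸ rfl)
  have hab : ¬G'.Adj a b ∧ a ≠ b := by
    constructor
    · intro h
      exact hc12 (by rw [← ha, ← hb]; exact ConnectedComponent.eq.mpr h.reachable)
    · rintro rfl; exact hc12 (ha ▸ hb ▸ rfl)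
  have hxc : G'.connectedComponentMk x = c0 := rfl
  have hyc : G'.connectedComponentMk y = c0 := by
    rw [hc0]; exact ConnectedComponent.eq.mpr hxy.symm.reachable
  have hzc : G'.connectedComponentMk z = c0 := by
    rw [← hyc]; exact ConnectedComponent.eq.mpr hyz.symm.reachable
  obtain ⟨hax1, hax2⟩ := hax x hxc
  obtain ⟨hay1, hay2⟩ := hax y hyc
  obtain ⟨haz1, haz2⟩ := hax z hzc
  obtain ⟨hbx1, hbx2⟩ := hbx x hxc
  obtain ⟨hby1, hby2⟩ := hbx y hyc
  obtain ⟨hbz1, hbz2⟩ := hbx z hzc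
  obtain ⟨hab1, hab2⟩ := hab
  -- pairwise distinct
  have hxyne : x ≠ y := hxy.ne
  have hyzne : y ≠ z := hyz.ne
  -- lift to V
  have hco : ∀ p q : ↥(Sᶜ), p ≠ q → (↑p : V) ≠ ↑q := fun p q h => Subtype.coe_ne_coe.mpr h
  have Hxy : G.Adj ↑x ↑y := hxy
  have Hyz : G.Adj ↑y ↑z := hyz
  have Hxz : ¬G.Adj ↑x ↑z := hxz
  have Hax : ¬G.Adj ↑a ↑x := hax1
  have Hay : ¬G.Adj ↑a ↑y := hay1
  have Haz : ¬G.Adj ↑a ↑z := haz1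
  have Hbx : ¬G.Adj ↑b ↑x := hbx1
  have Hby : ¬G.Adj ↑b ↑y := hby1
  have Hbz : ¬G.Adj ↑b ↑z := hbz1
  have Hab : ¬G.Adj ↑a ↑b := hab1
  have Nxy := hco _ _ hxyne
  have Nyz := hco _ _ hyzne
  have Nxz := hco _ _ hxzne
  have Nax := hco _ _ hax2
  have Nay := hco _ _ hay2
  have Naz := hco _ _ haz2
  have Nbx := hco _ _ hbx2
  have Nby := hco _ _ hby2
  have Nbz := hco _ _ hbz2
  have Nab := hco _ _ hab2
  clear_value G'
  clear hxy hyz hxz hax1 hay1 haz1 hbx1 hby1 hbz1 hab1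
  clear hxyne hyzne hxzne hax2 hay2 haz2 hbx2 hby2 hbz2 hab2
  apply hfree
  refine ⟨⟨![↑x, ↑y, ↑z, ↑a, ↑b], ?_⟩, ?_⟩
  · intro i j hij
    fin_cases i <;> fin_cases j <;>
      first
        | rfl
        | exact absurd hij Nxy | exact absurd hij Nxy.symm
        | exact absurd hij Nyz | exact absurd hij Nyz.symm
        | exact absurd hij Nxz | exact absurd hij Nxz.symm
        | exact absurd hij Nax | exact absurd hij Nax.symm
        | exact absurd hij Nay | exact absurd hij Nay.symm
        | exact absurd hij Naz | exact absurd hij Naz.symm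
        | exact absurd hij Nbx | exact absurd hij Nbx.symm
        | exact absurd hij Nby | exact absurd hij Nby.symm
        | exact absurd hij Nbz | exact absurd hij Nbz.symm
        | exact absurd hij Nab | exact absurd hij Nab.symm
  · intro i j
    fin_cases i <;> fin_cases j <;>
      simp only [Function.Embedding.coeFn_mk, P3Union2P1_adj] <;>
      first
        | exact iff_of_true Hxy (by decide)
        | exact iff_of_true Hxy.symm (by decide)
        | exact iff_of_true Hyz (by decide)
        | exact iff_of_true Hyz.symm (by decide)
        | exact iff_of_false G.irrefl (by decide)
        | exact iff_of_false Hxz (by decide)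
        | exact iff_of_false (fun h => Hxz h.symm) (by decide)
        | exact iff_of_false Hax (by decide)
        | exact iff_of_false (fun h => Hax h.symm) (by decide)
        | exact iff_of_false Hay (by decide)
        | exact iff_of_false (fun h => Hay h.symm) (by decide)
        | exact iff_of_false Haz (by decide)
        | exact iff_of_false (fun h => Haz h.symm) (by decide)
        | exact iff_of_false Hbx (by decide)
        | exact iff_of_false (fun h => Hbx h.symm) (by decide)
        | exact iff_of_false Hby (by decide)
        | exact iff_of_false (fun h => Hby h.symm) (by decide)
        | exact iff_of_false Hbz (by decide)
        | exact iff_of_false (fun h => Hbz h.symm) (by decide)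
        | exact iff_of_false Hab (by decide)
        | exact iff_of_false (fun h => Hab h.symm) (by decide)
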